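/- Let 0 ≤ l ≤ n−1 and let 1 ≤ i_1 < i_2 < ⋯ < i_l ≤ n−1. Then, in W_n, s_1 s_2 ⋯ s_{n−1} · r_{i_1} ⋯ r_{i_l} = r_{i_1+1} ⋯ r_{i_l+1} · s_{l+1} s_{l+2} ⋯ s_{n−1}. -/

import Mathlib

/-!
Common setup: the Weyl group `W n` of type `B_n`, realized as the group of
permutations `w` of `I_n = {±1, …, ±n}` (inside `Equiv.Perm ℤ`, fixing every
integer of absolute value `> n`) such that `w (-i) = - w i` for all `i`.
-/

namespace TypeB

/-- The generator `t = (1, -1)`. -/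
def t : Equiv.Perm ℤ := Equiv.swap 1 (-1)

/-- The generator `s i = (i, i+1)(-i, -(i+1))` (meaningful for `1 ≤ i`). -/
def s (i : ℕ) : Equiv.Perm ℤ :=
  Equiv.swap (i : ℤ) ((i : ℤ) + 1) * Equiv.swap (-(i : ℤ)) (-((i : ℤ) + 1))

/-- The generating set `S_n = {t, s_1, …, s_{n-1}}`. -/
def gens (n : ℕ) : Set (Equiv.Perm ℤ) :=
  {t} ∪ {x | ∃ i : ℕ, 1 ≤ i ∧ i < n ∧ x = s i}

/-- The Weyl group `W_n` of type `B_n`, as a subgroup of `Equiv.Perm ℤ`: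
permutations `w` with `w (-i) = - (w i)` for all `i` and fixing all `i` with `|i| > n`. -/
def W (n : ℕ) : Subgroup (Equiv.Perm ℤ) where
  carrier := {w | (∀ i : ℤ, w (-i) = - w i) ∧ ∀ i : ℤ, (n : ℤ) < |i| → w i = i}
  one_mem' := ⟨fun _ => rfl, fun _ _ => rfl⟩
  mul_mem' := by
    rintro u v ⟨hu1, hu2⟩ ⟨hv1, hv2⟩
    refine ⟨fun i => ?_, fun i hi => ?_⟩
    · simp only [Equiv.Perm.mul_apply, hv1, hu1]
    · simp only [Equiv.Perm.mul_apply, hv2 i hi, hu2 i hi]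
  inv_mem' := by
    rintro u ⟨hu1, hu2⟩
    refine ⟨fun i => ?_, fun i hi => ?_⟩
    · apply u.injective
      rw [Equiv.Perm.coe_inv, Equiv.apply_symm_apply, hu1, Equiv.apply_symm_apply]
    · apply u.injective
      rw [Equiv.Perm.coe_inv, Equiv.apply_symm_apply, hu2 i hi]

/-- The length of `w` with respect to the generating set `S_n`. -/
noncomputable def len (n : ℕ) (w : Equiv.Perm ℤ) : ℕ :=
  sInf {k | ∃ l : List (Equiv.Perm ℤ), (∀ x ∈ l, x ∈ gens n) ∧ l.prod = w ∧ l.length = k}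

/-- `l` is a reduced expression for `w` with respect to `S_n`. -/
def IsReduced (n : ℕ) (w : Equiv.Perm ℤ) (l : List (Equiv.Perm ℤ)) : Prop :=
  (∀ x ∈ l, x ∈ gens n) ∧ l.prod = w ∧ l.length = len n w

/-- `ℓ_t w`: the number of occurrences of `t` in a reduced expression of `w`
(independent of the chosen reduced expression). -/
noncomputable def lent (n : ℕ) (w : Equiv.Perm ℤ) : ℕ :=
  letI : DecidableEq (Equiv.Perm ℤ) := Classical.decEq _
  sInf {m | ∃ l, IsReduced n w l ∧ l.count t = m}

/-- `r 1 = t` and `r (i+1) = s i * r i`. -/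
def r : ℕ → Equiv.Perm ℤ
  | 0 => 1
  | 1 => t
  | (i + 2) => s (i + 1) * r (i + 1)

/-- `t_1 = t` and `t_{i+1} = s_i * t_i * s_i`. -/
def tperm : ℕ → Equiv.Perm ℤ
  | 0 => 1
  | 1 => t
  | (i + 2) => s (i + 1) * tperm (i + 1) * s (i + 1)

/-- `a l = r 1 * r 2 * ⋯ * r l`, with `a 0 = 1`. -/
def a : ℕ → Equiv.Perm ℤ
  | 0 => 1
  | (l + 1) => a l * r (l + 1)

/-- The symmetric group `𝔖_n`: the subgroup generated by `s_1, …, s_{n-1}`. -/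
def Sym (n : ℕ) : Subgroup (Equiv.Perm ℤ) :=
  Subgroup.closure {x | ∃ i : ℕ, 1 ≤ i ∧ i < n ∧ x = s i}

/-- The parabolic subgroup `𝔖_{l,n-l}`: generated by `{s_1, …, s_{n-1}} \ {s_l}`. -/
def SymP (n l : ℕ) : Subgroup (Equiv.Perm ℤ) :=
  Subgroup.closure {x | ∃ i : ℕ, 1 ≤ i ∧ i < n ∧ i ≠ l ∧ x = s i}

/-- `Y_{l,n-l}`: elements of `𝔖_n` of minimal length in their coset `w 𝔖_{l,n-l}`. -/
def Y (n l : ℕ) : Set (Equiv.Perm ℤ) :=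
  {w | w ∈ Sym n ∧ ∀ u ∈ SymP n l, len n w ≤ len n (w * u)}

/-- The subgroup `𝔖_{[i,j]}` generated by `s_i, …, s_{j-1}`. -/
def SymI (i j : ℕ) : Subgroup (Equiv.Perm ℤ) :=
  Subgroup.closure {x | ∃ k : ℕ, i ≤ k ∧ k < j ∧ x = s k}

/-- The function reversing the interval `[i,j]` (and `[-j,-i]`), for `1 ≤ i`. -/
def revFun (i j : ℤ) : ℤ → ℤ := fun k =>
  if 1 ≤ i ∧ i ≤ k ∧ k ≤ j then i + j - k
  else if 1 ≤ i ∧ -j ≤ k ∧ k ≤ -i then -(i + j) - k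
  else k

lemma revFun_involutive (i j : ℤ) : Function.Involutive (revFun i j) := by
  intro k
  unfold revFun
  split_ifs <;> omega

/-- `σ_{[i,j]}`: the longest element of `𝔖_{[i,j]}`, i.e. the order-reversing
permutation of the interval `[i,j]` (extended to `I_n` by `w(-k) = -w(k)`). -/
def sigmaI (i j : ℕ) : Equiv.Perm ℤ := (revFun_involutive (i : ℤ) (j : ℤ)).toPerm

/-- `σ_{l,n-l}`: the longest element of `𝔖_{l,n-l} = 𝔖_{[1,l]} × 𝔖_{[l+1,n]}`. -/
def sigmaLL (n l : ℕ) : Equiv.Perm ℤ := sigmaI 1 l * sigmaI (l + 1) n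

/-- The function negating all `k` with `|k| ≤ n`. -/
def negnFun (n : ℤ) : ℤ → ℤ := fun k => if -n ≤ k ∧ k ≤ n then -k else k

lemma negnFun_involutive (n : ℤ) : Function.Involutive (negnFun n) := by
  intro k
  unfold negnFun
  split_ifs <;> omega

/-- `w_n`: the longest element of `W_n`; as a permutation, `w_n i = -i` for `|i| ≤ n`. -/
def wlong (n : ℕ) : Equiv.Perm ℤ := (negnFun_involutive (n : ℤ)).toPerm

/-- `c_I = s_{i_1} s_{i_2} ⋯ s_{i_k}` for `I = {i_1 < i_2 < ⋯ < i_k}`. -/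
def cElt (I : Finset ℕ) : Equiv.Perm ℤ := ((I.sort (· ≤ ·)).map s).prod

/-- `d_I = s_{i_k} ⋯ s_{i_2} s_{i_1}` for `I = {i_1 < i_2 < ⋯ < i_k}`. -/
def dElt (I : Finset ℕ) : Equiv.Perm ℤ := (((I.sort (· ≤ ·)).map s).reverse).prod

/-- `X_n^{(m)}`: elements of `W_n` of minimal length in their coset `w W_m`. -/
def X (n m : ℕ) : Set (Equiv.Perm ℤ) :=
  {w | w ∈ W n ∧ ∀ u ∈ W m, len n w ≤ len n (w * u)}

/-- Bruhat order: `x ≤ y` iff some reduced expression of `y` contains a subword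
which is a reduced expression of `x`. -/
def BruhatLE (n : ℕ) (x y : Equiv.Perm ℤ) : Prop :=
  ∃ ly, IsReduced n y ly ∧ ∃ lx, lx.Sublist ly ∧ IsReduced n x lx

/-- Strict Bruhat order. -/
def BruhatLT (n : ℕ) (x y : Equiv.Perm ℤ) : Prop := BruhatLE n x y ∧ x ≠ y

/-- `D_i(W_n)`: the set of `x` such that exactly one of `s_i, s_{i+1}` is a
(right) descent of `x`. -/
def Dset (n i : ℕ) : Set (Equiv.Perm ℤ) :=
  {x | Xor' (len n (x * s i) < len n x) (len n (x * s (i + 1)) < len n x)}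

open Classical in
/-- `γ_i x`: the unique element of `{x s_i, x s_{i+1}} ∩ D_i(W_n)` (for `x ∈ D_i(W_n)`). -/
noncomputable def gamma (n i : ℕ) (x : Equiv.Perm ℤ) : Equiv.Perm ℤ :=
  if x * s i ∈ Dset n i then x * s i else x * s (i + 1)

/-- `E_m^{(r)}`: the set of `w ∈ W_m` such that `|w 1| > |w i|` for `2 ≤ i ≤ r+2`
and `(w 2, …, w (r+2))` is a shuffle of a positive decreasing sequence and a
negative increasing sequence. -/
def E (m ρ : ℕ) : Set (Equiv.Perm ℤ) :=
  {w | w ∈ W m ∧ (∀ i : ℕ, 2 ≤ i → i ≤ ρ + 2 → |w (i : ℤ)| < |w (1 : ℤ)|) ∧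
    ∀ i j : ℕ, 2 ≤ i → i < j → j ≤ ρ + 2 →
      (0 < w (i : ℤ) → 0 < w (j : ℤ) → w (j : ℤ) < w (i : ℤ)) ∧
      (w (i : ℤ) < 0 → w (j : ℤ) < 0 → w (i : ℤ) < w (j : ℤ))}

/-- The product `r_{i_1} ⋯ r_{i_l}` for a sequence `i : Fin l → ℕ`. -/
def prodR {l : ℕ} (i : Fin l → ℕ) : Equiv.Perm ℤ := (List.ofFn fun k => r (i k)).prod

/-- `(l, α, β, σ)` is a decomposition of `w` as in the decomposition lemma:
`l ≤ n`, `α, β ∈ Y_{l,n-l}`, `σ ∈ 𝔖_{l,n-l}` and `w = α a_l σ β⁻¹`. -/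
def IsDecomp (n : ℕ) (w : Equiv.Perm ℤ) (l : ℕ) (α β σ : Equiv.Perm ℤ) : Prop :=
  l ≤ n ∧ α ∈ Y n l ∧ β ∈ Y n l ∧ σ ∈ SymP n l ∧ w = α * a l * σ * β⁻¹



section Aux

lemma s_apply (i : ℕ) (hi : 1 ≤ i) (k : ℤ) :
    s i k = if k = (i : ℤ) then (i : ℤ) + 1 else if k = (i : ℤ) + 1 then (i : ℤ)
      else if k = -(i : ℤ) then -(i : ℤ) - 1 else if k = -(i : ℤ) - 1 then -(i : ℤ) else k := by
  have hi' : (1 : ℤ) ≤ i := by exact_mod_cast hi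
  simp only [s, Equiv.Perm.mul_apply, Equiv.swap_apply_def]
  split_ifs <;> omega

lemma swap_disjoint_swap {a b c d : ℤ} (h1 : a ≠ c) (h2 : a ≠ d) (h3 : b ≠ c) (h4 : b ≠ d) :
    (Equiv.swap a b).Disjoint (Equiv.swap c d) := by
  intro x
  by_cases hx : x = a ∨ x = b
  · right
    rcases hx with h | h <;> subst h <;>
      exact Equiv.swap_apply_of_ne_of_ne (by tauto) (by tauto)
  · left
    push_neg at hx
    exact Equiv.swap_apply_of_ne_of_ne hx.1 hx.2

lemma s_eq (i : ℕ) :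
    s i = Equiv.swap (i : ℤ) ((i : ℤ) + 1) * Equiv.swap (-(i : ℤ)) (-((i : ℤ) + 1)) := rfl

lemma s_succ_eq (i : ℕ) :
    s (i + 1) = Equiv.swap ((i : ℤ) + 1) ((i : ℤ) + 2) *
      Equiv.swap (-((i : ℤ) + 1)) (-((i : ℤ) + 2)) := by
  rw [s_eq]
  have h1 : ((i + 1 : ℕ) : ℤ) = (i : ℤ) + 1 := by push_cast; ring
  rw [h1]
  norm_num
  ring_nf

lemma s_disjoint_s (a b : ℕ) (hab : a + 2 ≤ b) : (s a).Disjoint (s b) := by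
  have h' : (a : ℤ) + 2 ≤ b := by exact_mod_cast hab
  rw [s_eq a, s_eq b]
  apply Equiv.Perm.Disjoint.mul_left <;> apply Equiv.Perm.Disjoint.mul_right <;>
    apply swap_disjoint_swap <;> omega

lemma s_comm_s (a b : ℕ) (hab : a + 2 ≤ b) : s a * s b = s b * s a :=
  (s_disjoint_s a b hab).commute

lemma t_comm_s (j : ℕ) (hj : 2 ≤ j) : s j * t = t * s j := by
  have hj' : (2 : ℤ) ≤ j := by exact_mod_cast hj
  have : t.Disjoint (s j) := by
    rw [t, s_eq]
    apply Equiv.Perm.Disjoint.mul_right <;> apply swap_disjoint_swap <;> omega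
  exact (this.commute.eq).symm

lemma s_braid (j : ℕ) (hj : 1 ≤ j) : s j * s (j + 1) * s j = s (j + 1) * s j * s (j + 1) := by
  have hj' : (1 : ℤ) ≤ j := by exact_mod_cast hj
  set x : ℤ := (j : ℤ) with hx
  set A : Equiv.Perm ℤ := Equiv.swap x (x + 1) with hA
  set B : Equiv.Perm ℤ := Equiv.swap (-x) (-(x + 1)) with hB
  set C : Equiv.Perm ℤ := Equiv.swap (x + 1) (x + 2) with hC
  set D : Equiv.Perm ℤ := Equiv.swap (-(x + 1)) (-(x + 2)) with hD
  have hsj : s j = A * B := s_eq j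
  have hsj1 : s (j + 1) = C * D := s_succ_eq j
  have cBC : Commute B C := (swap_disjoint_swap (by omega) (by omega) (by omega) (by omega)).commute
  have cBA : Commute B A := (swap_disjoint_swap (by omega) (by omega) (by omega) (by omega)).commute
  have cDA : Commute D A := (swap_disjoint_swap (by omega) (by omega) (by omega) (by omega)).commute
  have cDC : Commute D C := (swap_disjoint_swap (by omega) (by omega) (by omega) (by omega)).commute
  have L : A * B * (C * D) * (A * B) = A * C * A * (B * D * B) := by
    rw [cBC.mul_mul_mul_comm A D, (cBA.mul_left cDA).mul_mul_mul_comm (A * C) B]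
  have R : C * D * (A * B) * (C * D) = C * A * C * (D * B * D) := by
    rw [cDA.mul_mul_mul_comm C B, (Commute.mul_left cDC cBC).mul_mul_mul_comm (C * A) D]
  have hACA : A * C * A = C * A * C := by
    have e1 : A * C * A = Equiv.swap (x + 1) x * Equiv.swap (x + 2) (x + 1) *
        Equiv.swap (x + 1) x := by
      rw [hA, hC, Equiv.swap_comm x (x + 1), Equiv.swap_comm (x + 1) (x + 2)]
    have e2 : C * A * C = Equiv.swap (x + 1) (x + 2) * Equiv.swap x (x + 1) *
        Equiv.swap (x + 1) (x + 2) := by rw [hA, hC]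
    rw [e1, e2, Equiv.swap_mul_swap_mul_swap (by omega) (by omega),
      Equiv.swap_mul_swap_mul_swap (by omega) (by omega), Equiv.swap_comm]
  have hBDB : B * D * B = D * B * D := by
    have e1 : B * D * B = Equiv.swap (-(x + 1)) (-x) * Equiv.swap (-(x + 2)) (-(x + 1)) *
        Equiv.swap (-(x + 1)) (-x) := by
      rw [hB, hD, Equiv.swap_comm (-x) (-(x + 1)), Equiv.swap_comm (-(x + 1)) (-(x + 2))]
    have e2 : D * B * D = Equiv.swap (-(x + 1)) (-(x + 2)) * Equiv.swap (-x) (-(x + 1)) *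
        Equiv.swap (-(x + 1)) (-(x + 2)) := by rw [hB, hD]
    rw [e1, e2, Equiv.swap_mul_swap_mul_swap (by omega) (by omega),
      Equiv.swap_mul_swap_mul_swap (by omega) (by omega), Equiv.swap_comm]
  rw [hsj, hsj1, L, R, hACA, hBDB]

lemma s_mul_r (i : ℕ) (hi : 1 ≤ i) : s i * r i = r (i + 1) := by
  obtain ⟨m, rfl⟩ : ∃ m, i = m + 1 := ⟨i - 1, by omega⟩
  rfl

lemma r_s_comm (i j : ℕ) (hi : 1 ≤ i) (hj : i + 1 ≤ j) : s j * r i = r i * s j := by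
  induction i with
  | zero => omega
  | succ m ih =>
    rcases Nat.lt_or_ge 0 m with h | h
    · rw [← s_mul_r m h, ← mul_assoc, ← s_comm_s m j (by omega), mul_assoc, ih h (by omega),
        ← mul_assoc]
    · interval_cases m
      exact t_comm_s j hj

lemma r_s_shift (i j : ℕ) (hj : 1 ≤ j) (hij : j + 2 ≤ i) : s j * r i = r i * s (j + 1) := by
  obtain ⟨d, rfl⟩ : ∃ d, i = j + 2 + d := ⟨i - (j + 2), by omega⟩
  induction d with
  | zero =>
    have h1 : r (j + 2) = s (j + 1) * (s j * r j) := by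
      rw [s_mul_r j hj]; rfl
    have h2 : s (j + 1) * r j = r j * s (j + 1) := r_s_comm j (j + 1) hj (by omega)
    calc s j * r (j + 2 + 0) = s j * s (j + 1) * s j * r j := by
          rw [h1]; group
      _ = s (j + 1) * s j * s (j + 1) * r j := by rw [s_braid j hj]
      _ = s (j + 1) * s j * (s (j + 1) * r j) := by group
      _ = s (j + 1) * s j * (r j * s (j + 1)) := by rw [h2]
      _ = s (j + 1) * (s j * r j) * s (j + 1) := by group
      _ = r (j + 2 + 0) * s (j + 1) := by rw [← h1]
  | succ e ih =>
    have h1 : r (j + 2 + (e + 1)) = s (j + 2 + e) * r (j + 2 + e) := by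
      rw [s_mul_r _ (by omega)]
      congr 1
    rw [h1, ← mul_assoc, s_comm_s j (j + 2 + e) (by omega), mul_assoc, ih (by omega),
      ← mul_assoc]

/-- `cP j len = s j * s (j+1) * ⋯ * s (j+len-1)`. -/
def cP (j len : ℕ) : Equiv.Perm ℤ := ((List.range' j len).map s).prod

lemma cP_zero (j : ℕ) : cP j 0 = 1 := rfl

lemma cP_succ (j len : ℕ) : cP j (len + 1) = s j * cP (j + 1) len := by
  simp [cP, List.range'_succ]

lemma cP_r_comm (len j i : ℕ) (hi : 1 ≤ i) (hj : i + 1 ≤ j) : cP j len * r i = r i * cP j len := by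
  induction len generalizing j with
  | zero => simp [cP_zero]
  | succ m ih =>
    rw [cP_succ, mul_assoc, ih (j + 1) (by omega), ← mul_assoc, r_s_comm i j hi hj, mul_assoc]

lemma cP_r_key (len j i : ℕ) (hj : 1 ≤ j) (hji : j ≤ i) (hi : i ≤ j + len) :
    cP j (len + 1) * r i = r (i + 1) * cP (j + 1) len := by
  induction len generalizing j with
  | zero =>
    have : i = j := by omega
    subst this
    rw [cP_succ, cP_zero, mul_one, mul_one, s_mul_r i hj]
  | succ m ih =>
    rcases Nat.eq_or_lt_of_le hji with h | h
    · subst h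
      rw [cP_succ, mul_assoc, cP_r_comm (m + 1) (j + 1) j hj (by omega), ← mul_assoc,
        s_mul_r j hj]
    · have h1 : cP (j + 1) (m + 1) * r i = r (i + 1) * cP (j + 2) m :=
        ih (j + 1) (by omega) (by omega) (by omega)
      rw [cP_succ, mul_assoc, h1, ← mul_assoc, r_s_shift (i + 1) j hj (by omega), mul_assoc,
        ← cP_succ]

lemma prodR_zero (i : Fin 0 → ℕ) : prodR i = 1 := rfl

lemma prodR_succ {l : ℕ} (i : Fin (l + 1) → ℕ) :
    prodR i = r (i 0) * prodR (fun k => i k.succ) := by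
  simp [prodR, List.ofFn_succ]

lemma main_aux (l : ℕ) : ∀ (j len : ℕ) (i : Fin l → ℕ), 1 ≤ j →
    (∀ k : Fin l, j + (k : ℕ) ≤ i k ∧ i k < j + len) →
    cP j len * prodR i = prodR (fun k => i k + 1) * cP (j + l) (len - l) := by
  induction l with
  | zero =>
    intro j len i _ _
    simp [prodR_zero]
  | succ m ih =>
    intro j len i hj hk
    obtain ⟨len', rfl⟩ : ∃ len', len = len' + 1 := by
      have := hk 0
      exact ⟨len - 1, by omega⟩
    have h0 : cP j (len' + 1) * r (i 0) = r (i 0 + 1) * cP (j + 1) len' := by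
      apply cP_r_key len' j (i 0) hj
      · simpa using (hk 0).1
      · have := (hk 0).2; omega
    have htail : cP (j + 1) len' * prodR (fun k : Fin m => i k.succ) =
        prodR (fun k : Fin m => i k.succ + 1) * cP (j + 1 + m) (len' - m) := by
      apply ih (j + 1) len' (fun k => i k.succ) (by omega)
      intro k
      have := hk k.succ
      simp only [Fin.val_succ] at this
      constructor <;> omega
    calc cP j (len' + 1) * prodR i
        = cP j (len' + 1) * r (i 0) * prodR (fun k => i k.succ) := by
          rw [prodR_succ i, ← mul_assoc]
      _ = r (i 0 + 1) * (cP (j + 1) len' * prodR (fun k : Fin m => i k.succ)) := by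
          rw [h0, mul_assoc]
      _ = r (i 0 + 1) * (prodR (fun k : Fin m => i k.succ + 1) * cP (j + 1 + m) (len' - m)) := by
          rw [htail]
      _ = prodR (fun k => i k + 1) * cP (j + (m + 1)) (len' + 1 - (m + 1)) := by
          rw [prodR_succ (fun k => i k + 1)]
          have e1 : j + 1 + m = j + (m + 1) := by omega
          have e2 : len' - m = len' + 1 - (m + 1) := by omega
          rw [e1, e2, mul_assoc]

lemma sort_Icc (a b : ℕ) :
    (Finset.Icc a b).sort (· ≤ ·) = List.range' a (b + 1 - a) := by
  rw [Nat.Icc_eq_range']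
  show Multiset.sort (↑(List.range' a (b + 1 - a)) : Multiset ℕ) _ = _
  rw [Multiset.coe_sort]
  exact List.mergeSort_eq_self _ (List.pairwise_le_range' (s := a) (n := b + 1 - a) 1)

lemma cElt_Icc (a b : ℕ) : cElt (Finset.Icc a b) = cP a (b + 1 - a) := by
  rw [cElt, cP, sort_Icc]

end Aux

/-- for `0 ≤ l ≤ n-1` and `1 ≤ i_1 < ⋯ < i_l ≤ n-1`,
`s_1 s_2 ⋯ s_{n-1} · r_{i_1} ⋯ r_{i_l} = r_{i_1+1} ⋯ r_{i_l+1} · s_{l+1} ⋯ s_{n-1}`. -/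
theorem stmt14 (n l : ℕ) (hn : 1 ≤ n) (hl : l ≤ n - 1)
    (i : Fin l → ℕ) (hi : StrictMono i) (hi1 : ∀ k, 1 ≤ i k ∧ i k ≤ n - 1) :
    cElt (Finset.Icc 1 (n - 1)) * prodR i =
      prodR (fun k => i k + 1) * cElt (Finset.Icc (l + 1) (n - 1)) := by
  have key' : ∀ m : ℕ, ∀ hm : m < l, 1 + m ≤ i ⟨m, hm⟩ := by
    intro m
    induction m with
    | zero => intro hm; simpa using (hi1 ⟨0, hm⟩).1
    | succ p ihp =>
      intro hm
      have hp : p < l := by omega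
      have h1 := ihp hp
      have h2 : i ⟨p, hp⟩ < i ⟨p + 1, hm⟩ := hi (by simp [Fin.lt_def])
      omega
  have key : ∀ k : Fin l, 1 + (k : ℕ) ≤ i k := fun k => key' k.1 k.2
  rw [cElt_Icc 1 (n - 1), cElt_Icc (l + 1) (n - 1)]
  have e1 : n - 1 + 1 - 1 = n - 1 := by omega
  have e2 : n - 1 + 1 - (l + 1) = n - 1 - l := by omega
  rw [e1, e2]
  have := main_aux l 1 (n - 1) i (le_refl 1) (fun k => ⟨key k, by have := (hi1 k).2; omega⟩)
  rw [this, Nat.add_comm 1 l]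

end TypeB
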